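/- For every positive integer σ there exists a constant c > 0 such that for every unweighted simple graph G on n vertices, the number of edges e of G with frag_G(e) > σ is at most c · n^{1 + 1/⌊(σ+1)/2⌋}. -/

import Mathlib

open SimpleGraph

section Aux

variable {V : Type*} [DecidableEq V]

/-- The fragility property: each edge has fragility greater than `σ`. -/
private def FragProp (σ : ℕ) (H : SimpleGraph V) : Prop :=
  ∀ u v : V, H.Adj u v → (σ : ℕ∞) < (H.deleteEdges {s(u,v)}).edist u v

/-- A vertex on a shortest walk to `b`, lying at distance at least the walk's length, is `b`. -/
private lemma mem_support_shortest {H : SimpleGraph V} {v b u : V} {p : H.Walk v b}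
    (hp : (p.length : ℕ∞) = H.edist v b) (hu : u ∈ p.support)
    (hle : H.edist v b ≤ H.edist v u) : u = b := by
  have h1 : H.edist v u ≤ (p.takeUntil u hu).length := edist_le _
  have h2 : H.edist u b ≤ (p.dropUntil u hu).length := edist_le _
  have hsplit : (p.takeUntil u hu).length + (p.dropUntil u hu).length = p.length := by
    have := congr_arg Walk.length (p.take_spec hu)
    rwa [Walk.length_append] at this
  have hsum : H.edist v u + H.edist u b ≤ H.edist v b := by
    calc H.edist v u + H.edist u b
        ≤ ((p.takeUntil u hu).length : ℕ∞) + ((p.dropUntil u hu).length : ℕ∞) :=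
          add_le_add h1 h2
      _ = (p.length : ℕ∞) := by exact_mod_cast congrArg (Nat.cast : ℕ → ℕ∞) hsplit
      _ = H.edist v b := hp
  have hne : H.edist v u ≠ ⊤ := (h1.trans_lt (ENat.coe_lt_top _)).ne
  have hle2 : H.edist v u + H.edist u b ≤ H.edist v u := le_trans hsum hle
  have h0 : H.edist u b = 0 := by
    by_contra h
    have h1' : 1 ≤ H.edist u b := Order.one_le_iff_pos.mpr (pos_iff_ne_zero.mpr h)
    have h2' : H.edist v u + 1 ≤ H.edist v u := le_trans (add_le_add le_rfl h1') hle2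
    exact lt_irrefl _ ((ENat.add_one_le_iff hne).mp h2')
  exact (edist_eq_zero_iff.mp h0)

/-- Key lemma: a vertex cannot have two distinct neighbors that are at least as close
to a base vertex `v`, if the total length is at most `σ`. -/
private lemma no_two_close {σ : ℕ} {H : SimpleGraph V} (hF : FragProp σ H) {v u a b : V}
    (hua : H.Adj u a) (hub : H.Adj u b) (hab : a ≠ b)
    (ha : H.edist v a ≤ H.edist v u) (hb : H.edist v b ≤ H.edist v u)
    (hsum : H.edist v a + H.edist v b + 1 ≤ (σ : ℕ∞)) : False := by
  have hafin : H.edist v a ≠ ⊤ := by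
    intro h; rw [h] at hsum; simp at hsum
  have hbfin : H.edist v b ≠ ⊤ := by
    intro h; rw [h] at hsum; simp [add_comm] at hsum
  obtain ⟨pa, hpa⟩ := exists_walk_of_edist_ne_top hafin
  obtain ⟨pb, hpb⟩ := exists_walk_of_edist_ne_top hbfin
  set W : H.Walk u a := Walk.cons hub (pb.reverse.append pa) with hW
  have hWlen : (W.length : ℕ∞) = 1 + H.edist v b + H.edist v a := by
    rw [hW]
    simp only [Walk.length_cons, Walk.length_append, Walk.length_reverse]
    push_cast
    rw [hpb, hpa]
    ring
  have hnotu_pb : u ∉ pb.support := by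
    intro hmem
    exact hub.ne (mem_support_shortest hpb hmem hb)
  have hnotu_pa : u ∉ pa.support := by
    intro hmem
    exact hua.ne (mem_support_shortest hpa hmem ha)
  have hedges : ∀ e ∈ W.edges, e ∈ (H.deleteEdges {s(u,a)}).edgeSet := by
    intro e he
    rw [edgeSet_deleteEdges]
    refine ⟨W.edges_subset_edgeSet he, ?_⟩
    simp only [Set.mem_singleton_iff]
    intro hea
    subst hea
    rw [hW] at he
    simp only [Walk.edges_cons, List.mem_cons, Walk.edges_append, Walk.edges_reverse,
      List.mem_append, List.mem_reverse] at he
    rcases he with h | h | h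
    · rw [Sym2.eq_iff] at h
      rcases h with ⟨-, h⟩ | ⟨h, -⟩
      · exact hab h
      · exact hub.ne h
    · exact hnotu_pb (Walk.fst_mem_support_of_mem_edges pb h)
    · exact hnotu_pa (Walk.fst_mem_support_of_mem_edges pa h)
  have hlt := hF u a hua
  have hWle : (H.deleteEdges {s(u,a)}).edist u a ≤ (W.length : ℕ∞) := by
    have := edist_le (W.transfer (H.deleteEdges {s(u,a)}) hedges)
    rwa [Walk.length_transfer] at this
  rw [hWlen] at hWle
  have : (H.deleteEdges {s(u,a)}).edist u a ≤ (σ : ℕ∞) := by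
    refine hWle.trans ?_
    calc 1 + H.edist v b + H.edist v a = H.edist v a + H.edist v b + 1 := by ring
      _ ≤ (σ : ℕ∞) := hsum
  exact absurd hlt (not_lt.mpr this)

private lemma card_pairs_fst (A B : Finset V) (R : V → V → Prop) [DecidableRel R] :
    ((A ×ˢ B).filter fun p => R p.1 p.2).card = ∑ a ∈ A, (B.filter (R a)).card := by
  rw [Finset.card_filter, Finset.sum_product]
  exact Finset.sum_congr rfl fun a _ => (Finset.card_filter _ _).symm

private lemma card_pairs_comm (A B : Finset V) (R : V → V → Prop) [DecidableRel R] :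
    ∑ a ∈ A, (B.filter (R a)).card = ∑ b ∈ B, (A.filter (fun a => R a b)).card := by
  simp only [Finset.card_filter]
  exact Finset.sum_comm

open Classical in
private noncomputable def sph [Fintype V] (H : SimpleGraph V) (v : V) (i : ℕ) : Finset V :=
  Finset.univ.filter (fun w => H.edist v w = (i : ℕ∞))

open Classical in
private lemma mem_sph [Fintype V] {H : SimpleGraph V} {v w : V} {i : ℕ} :
    w ∈ sph H v i ↔ H.edist v w = (i : ℕ∞) := by
  simp [sph]

open Classical in
private lemma sphere_growth [Fintype V] {σ s : ℕ} {H : SimpleGraph V} [DecidableRel H.Adj]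
    (hF : FragProp σ H)
    (v : V) (i : ℕ) (h2i : 2 * i + 1 ≤ σ) (hdeg : ∀ x, s + 1 ≤ H.degree x) :
    s * (sph H v i).card ≤ (sph H v (i + 1)).card := by
  classical
  have hlow : ∀ u ∈ sph H v i, s ≤ ((sph H v (i+1)).filter (H.Adj u)).card := by
    intro u hu
    rw [mem_sph] at hu
    set N := H.neighborFinset u with hN
    set A := N.filter (fun w => H.edist v w ≤ (i : ℕ∞)) with hA
    have hA1 : A.card ≤ 1 := by
      rw [Finset.card_le_one]
      intro a ha b hb
      by_contra hab
      simp only [hA, Finset.mem_filter, hN, mem_neighborFinset] at ha hb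
      exact no_two_close hF ha.1 hb.1 hab (hu ▸ ha.2) (hu ▸ hb.2)
        (by
          calc H.edist v a + H.edist v b + 1 ≤ (i : ℕ∞) + i + 1 :=
                add_le_add (add_le_add ha.2 hb.2) le_rfl
            _ = ((2 * i + 1 : ℕ) : ℕ∞) := by push_cast; ring
            _ ≤ (σ : ℕ∞) := by exact_mod_cast h2i)
    have hsub : N \ A ⊆ (sph H v (i+1)).filter (H.Adj u) := by
      intro w hw
      simp only [Finset.mem_sdiff, hA, Finset.mem_filter, hN, mem_neighborFinset, not_and,
        not_le] at hw
      obtain ⟨hadj, hgt⟩ := hw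
      have hgt' := hgt hadj
      have hle : H.edist v w ≤ (i : ℕ∞) + 1 := by
        calc H.edist v w ≤ H.edist v u + H.edist u w := SimpleGraph.edist_triangle
          _ ≤ (i : ℕ∞) + 1 := add_le_add (le_of_eq hu) (edist_eq_one_iff_adj.mpr hadj).le
      have heq : H.edist v w = ((i + 1 : ℕ) : ℕ∞) := by
        push_cast
        exact le_antisymm hle ((ENat.add_one_le_iff (ENat.coe_ne_top i)).mpr hgt')
      simp only [Finset.mem_filter, mem_sph]
      exact ⟨heq, hadj⟩
    have hcard : s ≤ (N \ A).card := by
      have h1 : A ⊆ N := Finset.filter_subset _ _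
      rw [Finset.card_sdiff_of_subset h1]
      have h2 : s + 1 ≤ N.card := hdeg u
      omega
    exact hcard.trans (Finset.card_le_card hsub)
  have hup : ∀ w ∈ sph H v (i+1), ((sph H v i).filter (fun a => H.Adj a w)).card ≤ 1 := by
    intro w hw
    rw [mem_sph] at hw
    rw [Finset.card_le_one]
    intro a ha b hb
    by_contra hab
    simp only [Finset.mem_filter, mem_sph] at ha hb
    refine absurd (no_two_close hF (v := v) (u := w) ha.2.symm hb.2.symm hab ?_ ?_ ?_) not_false
    · rw [ha.1, hw]; exact_mod_cast Nat.le_succ i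
    · rw [hb.1, hw]; exact_mod_cast Nat.le_succ i
    · rw [ha.1, hb.1]
      calc ((i:ℕ∞)) + i + 1 = ((2 * i + 1 : ℕ) : ℕ∞) := by push_cast; ring
        _ ≤ (σ : ℕ∞) := by exact_mod_cast h2i
  calc s * (sph H v i).card = ∑ _u ∈ sph H v i, s := by
        rw [Finset.sum_const, smul_eq_mul, mul_comm]
    _ ≤ ∑ u ∈ sph H v i, ((sph H v (i+1)).filter (H.Adj u)).card := Finset.sum_le_sum hlow
    _ = ∑ w ∈ sph H v (i+1), ((sph H v i).filter (fun a => H.Adj a w)).card :=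
        card_pairs_comm _ _ _
    _ ≤ ∑ _w ∈ sph H v (i+1), 1 := Finset.sum_le_sum hup
    _ = (sph H v (i+1)).card := by rw [Finset.sum_const, smul_eq_mul, mul_one]

private lemma ball_card [Fintype V] [Nonempty V] {σ k s : ℕ} {H : SimpleGraph V}
    (hF : FragProp σ H)
    (hk1 : 1 ≤ k) (hk : 2 * k ≤ σ + 1) [DecidableRel H.Adj] (hdeg : ∀ x, s + 1 ≤ H.degree x) :
    1 + s ^ k ≤ Fintype.card V := by
  classical
  obtain ⟨v⟩ := ‹Nonempty V›
  have hchain : ∀ i, i ≤ k → s ^ i ≤ (sph H v i).card := by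
    intro i
    induction i with
    | zero =>
      intro _
      have hv : v ∈ sph H v 0 := mem_sph.mpr (by simp [SimpleGraph.edist_self])
      simpa using Finset.card_pos.mpr ⟨v, hv⟩
    | succ i ih =>
      intro hik
      have h2i : 2 * i + 1 ≤ σ := by omega
      calc s ^ (i + 1) = s * s ^ i := by ring
        _ ≤ s * (sph H v i).card := Nat.mul_le_mul_left s (ih (by omega))
        _ ≤ (sph H v (i+1)).card := sphere_growth hF v i h2i hdeg
  have hdisj : Disjoint (sph H v 0) (sph H v k) := by
    rw [Finset.disjoint_left]
    intro x h0 hkx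
    rw [mem_sph] at h0 hkx
    rw [h0] at hkx
    have : (0 : ℕ) = k := by exact_mod_cast hkx
    omega
  calc 1 + s ^ k ≤ (sph H v 0).card + (sph H v k).card := by
        have h0 : 1 ≤ (sph H v 0).card :=
          Finset.card_pos.mpr ⟨v, mem_sph.mpr (by simp [SimpleGraph.edist_self])⟩
        exact Nat.add_le_add h0 (hchain k le_rfl)
    _ = (sph H v 0 ∪ sph H v k).card := (Finset.card_union_of_disjoint hdisj).symm
    _ ≤ Fintype.card V := by
        simpa using Finset.card_le_card (Finset.subset_univ (sph H v 0 ∪ sph H v k))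

private lemma fragProp_induce {σ : ℕ} {H : SimpleGraph V} (hF : FragProp σ H) (t : Set V) :
    FragProp σ (H.induce t) := by
  intro u v hadj
  have hadj' : H.Adj ↑u ↑v := hadj
  by_contra hle
  push_neg at hle
  have hne : ((H.induce t).deleteEdges {s(u,v)}).edist u v ≠ ⊤ :=
    fun h => by rw [h] at hle; exact (ENat.coe_lt_top σ).not_ge (by exact_mod_cast hle)
  obtain ⟨p, hp⟩ := exists_walk_of_edist_ne_top hne
  let f : (H.induce t).deleteEdges {s(u,v)} →g H.deleteEdges {s((u:V),(v:V))} :=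
    { toFun := Subtype.val
      map_rel' := by
        intro a b hab
        rw [deleteEdges_adj] at hab ⊢
        refine ⟨hab.1, ?_⟩
        intro hc
        apply hab.2
        simp only [Set.mem_singleton_iff, Sym2.eq_iff] at hc ⊢
        rcases hc with ⟨h1, h2⟩ | ⟨h1, h2⟩
        · exact Or.inl ⟨Subtype.ext h1, Subtype.ext h2⟩
        · exact Or.inr ⟨Subtype.ext h1, Subtype.ext h2⟩ }
  have hlen := edist_le (p.map f)
  rw [Walk.length_map, hp] at hlen
  exact absurd (hF u v hadj') (not_lt.mpr (hlen.trans hle))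

/-- In any nonempty finite vertex subset there is a vertex of low degree within the subset. -/
private lemma exists_low_degree [Fintype V] {σ k d : ℕ} {H : SimpleGraph V} (hF : FragProp σ H)
    (hk1 : 1 ≤ k) (hk : 2 * k ≤ σ + 1) (hd : Fintype.card V < 1 + d ^ k)
    (T : Finset V) (hT : T.Nonempty) [DecidableRel H.Adj] :
    ∃ x ∈ T, (T.filter (H.Adj x)).card ≤ d := by
  classical
  by_contra hcon
  push_neg at hcon
  haveI : Nonempty (↑(↑T : Set V)) := ⟨⟨hT.choose, hT.choose_spec⟩⟩
  have hF' : FragProp σ (H.induce (↑T : Set V)) := fragProp_induce hF _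
  haveI : DecidableRel (H.induce (↑T : Set V)).Adj := Classical.decRel _
  have hdeg : ∀ x : ↑(↑T : Set V), d + 1 ≤ (H.induce (↑T : Set V)).degree x := by
    intro x
    have hcard : ((H.induce (↑T : Set V)).neighborFinset x).card
        = (T.filter (H.Adj ↑x)).card := by
      refine Finset.card_bij (fun y _ => y.1) ?_ ?_ ?_
      · intro y hy
        rw [mem_neighborFinset] at hy
        exact Finset.mem_filter.mpr ⟨y.2, hy⟩
      · intro y _ z _ h
        exact Subtype.ext h
      · intro y hy
        rw [Finset.mem_filter] at hy
        exact ⟨⟨y, hy.1⟩, by rw [mem_neighborFinset]; exact hy.2, rfl⟩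
    rw [SimpleGraph.degree, hcard]
    exact hcon ↑x x.2
  have := ball_card hF' hk1 hk hdeg
  have hle : Fintype.card ↑(↑T : Set V) ≤ Fintype.card V := Fintype.card_le_of_injective _
    Subtype.val_injective
  omega

private lemma pair_count {H : SimpleGraph V} [DecidableRel H.Adj] {d : ℕ}
    (hlow : ∀ T : Finset V, T.Nonempty → ∃ x ∈ T, (T.filter (H.Adj x)).card ≤ d)
    (S : Finset V) : ((S ×ˢ S).filter fun p => H.Adj p.1 p.2).card ≤ 2 * d * S.card := by
  induction S using Finset.strongInduction with
  | _ S ih =>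
    rcases S.eq_empty_or_nonempty with rfl | hS
    · simp
    obtain ⟨x, hxS, hxd⟩ := hlow S hS
    set S' := S.erase x with hS'
    have hsub : ((S ×ˢ S).filter fun p => H.Adj p.1 p.2) ⊆
        ((S' ×ˢ S').filter fun p => H.Adj p.1 p.2)
          ∪ ({x} ×ˢ S).filter (fun p => H.Adj p.1 p.2)
          ∪ (S ×ˢ {x}).filter (fun p => H.Adj p.1 p.2) := by
      intro p hp
      simp only [Finset.mem_filter, Finset.mem_product] at hp
      obtain ⟨⟨h1, h2⟩, hadj⟩ := hp
      by_cases e1 : p.1 = x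
      · refine Finset.mem_union_left _ (Finset.mem_union_right _ ?_)
        simp only [Finset.mem_filter, Finset.mem_product, Finset.mem_singleton]
        exact ⟨⟨e1, h2⟩, hadj⟩
      by_cases e2 : p.2 = x
      · refine Finset.mem_union_right _ ?_
        simp only [Finset.mem_filter, Finset.mem_product, Finset.mem_singleton]
        exact ⟨⟨h1, e2⟩, hadj⟩
      · refine Finset.mem_union_left _ (Finset.mem_union_left _ ?_)
        simp only [Finset.mem_filter, Finset.mem_product, hS', Finset.mem_erase]
        exact ⟨⟨⟨e1, h1⟩, ⟨e2, h2⟩⟩, hadj⟩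
    have hxcount1 : (({x} ×ˢ S).filter (fun p => H.Adj p.1 p.2)).card ≤ d := by
      have heq : ({x} ×ˢ S).filter (fun p => H.Adj p.1 p.2) = {x} ×ˢ (S.filter (H.Adj x)) := by
        ext ⟨a, b⟩
        simp only [Finset.mem_filter, Finset.mem_product, Finset.mem_singleton]
        constructor
        · rintro ⟨⟨rfl, hb⟩, hadj⟩; exact ⟨rfl, hb, hadj⟩
        · rintro ⟨rfl, hb, hadj⟩; exact ⟨⟨rfl, hb⟩, hadj⟩
      rw [heq, Finset.card_product, Finset.card_singleton, one_mul]
      exact hxd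
    have hxcount2 : ((S ×ˢ {x}).filter (fun p => H.Adj p.1 p.2)).card ≤ d := by
      have heq : (S ×ˢ {x}).filter (fun p => H.Adj p.1 p.2) = (S.filter (H.Adj x)) ×ˢ {x} := by
        ext ⟨a, b⟩
        simp only [Finset.mem_filter, Finset.mem_product, Finset.mem_singleton]
        constructor
        · rintro ⟨⟨ha, rfl⟩, hadj⟩; exact ⟨⟨ha, hadj.symm⟩, rfl⟩
        · rintro ⟨⟨ha, hadj⟩, rfl⟩; exact ⟨⟨ha, rfl⟩, hadj.symm⟩
      rw [heq, Finset.card_product, Finset.card_singleton, mul_one]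
      exact hxd
    have hrec := ih S' (Finset.erase_ssubset hxS)
    have hcard : S'.card = S.card - 1 := Finset.card_erase_of_mem hxS
    have h1 : 1 ≤ S.card := Finset.card_pos.mpr hS
    calc ((S ×ˢ S).filter fun p => H.Adj p.1 p.2).card
        ≤ (((S' ×ˢ S').filter fun p => H.Adj p.1 p.2)
          ∪ ({x} ×ˢ S).filter (fun p => H.Adj p.1 p.2)
          ∪ (S ×ˢ {x}).filter (fun p => H.Adj p.1 p.2)).card := Finset.card_le_card hsub
      _ ≤ (((S' ×ˢ S').filter fun p => H.Adj p.1 p.2)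
          ∪ ({x} ×ˢ S).filter (fun p => H.Adj p.1 p.2)).card
          + ((S ×ˢ {x}).filter (fun p => H.Adj p.1 p.2)).card := Finset.card_union_le _ _
      _ ≤ ((S' ×ˢ S').filter fun p => H.Adj p.1 p.2).card
          + (({x} ×ˢ S).filter (fun p => H.Adj p.1 p.2)).card
          + ((S ×ˢ {x}).filter (fun p => H.Adj p.1 p.2)).card :=
            Nat.add_le_add_right (Finset.card_union_le _ _) _
      _ ≤ 2 * d * S'.card + d + d :=
            Nat.add_le_add (Nat.add_le_add hrec hxcount1) hxcount2
      _ ≤ 2 * d * S.card := by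
            rw [hcard]
            obtain ⟨m, hm⟩ := Nat.exists_eq_add_of_le h1
            rw [hm]
            have e1 : 1 + m - 1 = m := by omega
            have e2 : 2 * d * (1 + m) = 2 * d * m + d + d := by ring
            rw [e1, e2]

/-- Main counting lemma: a graph with the fragility property has few edges. -/
private lemma edge_count [Fintype V] {σ k d : ℕ} {H : SimpleGraph V} [DecidableRel H.Adj]
    (hF : FragProp σ H) (hk1 : 1 ≤ k) (hk : 2 * k ≤ σ + 1)
    (hd : Fintype.card V ≤ d ^ k) :
    H.edgeFinset.card ≤ d * Fintype.card V := by
  classical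
  have hlow : ∀ T : Finset V, T.Nonempty → ∃ x ∈ T, (T.filter (H.Adj x)).card ≤ d :=
    fun T hT => exists_low_degree hF hk1 hk (by omega) T hT
  have hpair := pair_count hlow (Finset.univ : Finset V)
  have hdeg_eq : ∀ u : V, H.degree u = (Finset.univ.filter (H.Adj u)).card := by
    intro u
    rw [SimpleGraph.degree]
    congr 1
    ext w
    simp [mem_neighborFinset]
  have hsum : ∑ u : V, H.degree u
      = ((Finset.univ ×ˢ Finset.univ).filter fun p : V × V => H.Adj p.1 p.2).card := by
    rw [card_pairs_fst]
    exact Finset.sum_congr rfl fun u _ => hdeg_eq u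
  have h2m := H.sum_degrees_eq_twice_card_edges
  have h2 : 2 * H.edgeFinset.card ≤ 2 * (d * Fintype.card V) := by
    rw [← h2m, hsum, ← mul_assoc]
    simpa [Finset.card_univ] using hpair
  exact Nat.le_of_mul_le_mul_left h2 (by norm_num)

end Aux

/-- For every positive integer `σ` there is a constant `c > 0` such that
every simple graph `G` on `n` vertices has at most `c · n^(1 + 1/⌊(σ+1)/2⌋)` edges `e`
with `frag_G(e) > σ`. -/
theorem stmt_7 (σ : ℕ) (hσ : 0 < σ) :
    ∃ c : ℝ, 0 < c ∧ ∀ (n : ℕ) (G : SimpleGraph (Fin n)),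
      (({e ∈ G.edgeSet | ∀ u v : Fin n, e = s(u,v) →
          (σ : ℕ∞) < (G.deleteEdges {e}).edist u v}).ncard : ℝ) ≤
        c * (n : ℝ) ^ ((1 : ℝ) + 1 / (((σ + 1) / 2 : ℕ) : ℝ)) := by
  classical
  set k : ℕ := (σ + 1) / 2 with hkdef
  have hk1 : 1 ≤ k := by omega
  have hk : 2 * k ≤ σ + 1 := by omega
  refine ⟨2, by norm_num, ?_⟩
  intro n G
  -- the fragile subgraph
  set H : SimpleGraph (Fin n) :=
    { Adj := fun u v => G.Adj u v ∧ (σ : ℕ∞) < (G.deleteEdges {s(u,v)}).edist u v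
      symm := by
        refine ⟨fun u v h => ?_⟩
        refine ⟨h.1.symm, ?_⟩
        rw [Sym2.eq_swap, SimpleGraph.edist_comm]
        exact h.2
      loopless := ⟨fun v h => G.loopless.irrefl v h.1⟩ } with hHdef
  haveI : DecidableRel H.Adj := Classical.decRel _
  have hset : {e ∈ G.edgeSet | ∀ u v : Fin n, e = s(u,v) →
      (σ : ℕ∞) < (G.deleteEdges {e}).edist u v} = H.edgeSet := by
    ext e
    induction e with
    | _ u v =>
      simp only [Set.mem_setOf_eq, mem_edgeSet]
      constructor
      · rintro ⟨hG, hall⟩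
        exact ⟨hG, hall u v rfl⟩
      · rintro ⟨hadj, hlt⟩
        refine ⟨hadj, ?_⟩
        intro u' v' h
        rw [Sym2.eq_iff] at h
        rcases h with ⟨rfl, rfl⟩ | ⟨rfl, rfl⟩
        · exact hlt
        · rw [SimpleGraph.edist_comm]
          exact hlt
  have hF : FragProp σ H := by
    intro u v hadj
    have hle : H.deleteEdges {s(u,v)} ≤ G.deleteEdges {s(u,v)} := by
      intro a b hab
      rw [deleteEdges_adj] at hab ⊢
      exact ⟨hab.1.1, hab.2⟩
    exact lt_of_lt_of_le hadj.2 (edist_anti hle)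
  -- cardinality as edge count
  have hncard : ({e ∈ G.edgeSet | ∀ u v : Fin n, e = s(u,v) →
      (σ : ℕ∞) < (G.deleteEdges {e}).edist u v}).ncard = H.edgeFinset.card := by
    rw [hset, ← SimpleGraph.coe_edgeFinset, Set.ncard_coe_finset]
  rw [hncard]
  rcases Nat.eq_zero_or_pos n with rfl | hn
  · -- trivial case n = 0
    have hcz : H.edgeFinset.card = 0 := by
      rw [Finset.card_eq_zero]
      ext e
      induction e with
      | _ u v => exact u.elim0
    rw [hcz]
    rw [Nat.cast_zero, Real.zero_rpow]
    · norm_num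
    · positivity
  -- choose d minimal with n ≤ d ^ k
  have hex : ∃ d : ℕ, n ≤ d ^ k := ⟨n, Nat.le_self_pow (by omega) n⟩
  set d : ℕ := Nat.find hex with hddef
  have hdspec : n ≤ d ^ k := Nat.find_spec hex
  have hd1 : 1 ≤ d := by
    by_contra h
    have hd0 : d = 0 := by omega
    rw [hd0, Nat.zero_pow (by omega)] at hdspec
    omega
  have hm : H.edgeFinset.card ≤ d * n := by
    have := edge_count hF hk1 hk (by simpa using hdspec)
    simpa using this
  -- real-number estimates
  have hnR : (0:ℝ) < n := by exact_mod_cast hn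
  have hkR : (0:ℝ) < k := by exact_mod_cast hk1
  have hd_lt : ((d : ℝ) - 1) < (n:ℝ) ^ ((k:ℝ)⁻¹) := by
    have hmin : (d - 1) ^ k < n := by
      have := Nat.find_min hex (show d - 1 < d by omega)
      omega
    have hcast : ((d - 1 : ℕ) : ℝ) = (d : ℝ) - 1 := by
      push_cast [Nat.cast_sub hd1]; ring
    by_contra hcon
    push_neg at hcon
    have h1 : (n:ℝ) = ((n:ℝ) ^ ((k:ℝ)⁻¹)) ^ k := by
      rw [← Real.rpow_natCast ((n:ℝ) ^ ((k:ℝ)⁻¹)) k, ← Real.rpow_mul hnR.le]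
      rw [inv_mul_cancel₀ (by positivity), Real.rpow_one]
    have h2 : ((n:ℝ) ^ ((k:ℝ)⁻¹)) ^ k ≤ ((d:ℝ) - 1) ^ k := by
      apply pow_le_pow_left₀ (by positivity) hcon
    have h3 : ((d:ℝ) - 1) ^ k < (n:ℝ) := by
      rw [← hcast]
      exact_mod_cast hmin
    linarith [h1 ▸ h2]
  have hone : (1:ℝ) ≤ (n:ℝ) ^ ((k:ℝ)⁻¹) := by
    apply Real.one_le_rpow (by exact_mod_cast hn) (by positivity)
  have hdR : (d : ℝ) ≤ 2 * (n:ℝ) ^ ((k:ℝ)⁻¹) := by linarith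
  have hrpow : (n:ℝ) ^ ((1:ℝ) + 1 / (k:ℝ)) = (n:ℝ) * (n:ℝ) ^ ((k:ℝ)⁻¹) := by
    rw [Real.rpow_add hnR, Real.rpow_one, one_div]
  calc (H.edgeFinset.card : ℝ) ≤ (d : ℝ) * n := by exact_mod_cast hm
    _ ≤ (2 * (n:ℝ) ^ ((k:ℝ)⁻¹)) * n := by
        apply mul_le_mul_of_nonneg_right hdR hnR.le
    _ = 2 * (n : ℝ) ^ ((1 : ℝ) + 1 / (k : ℝ)) := by rw [hrpow]; ring
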